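/- Let n ≥ 1 be an integer, let M be a nonempty finite index set with |M| ≤ n, and for each m ∈ M let ℓ_m be an integer with 2 ≤ ℓ_m ≤ n and q^m : ZMod ℓ_m → ℝ. Let Φ = Σ_{m ∈ M} Φ_{ℓ_m}(q^m). If Φ ≥ 4n⁴, then there exist m ∈ M and i ∈ ZMod ℓ_m such that Φ_{ℓ_m}(q^m + e_i) − Φ_{ℓ_m}(q^m) ≤ −√Φ / n². -/
import Mathlib


/-- The cyclic sum-of-squares potential `Φ_ℓ(q) = Σ_{k ∈ ZMod ℓ} (q k − q (k−1))²`
(summed via the enumeration `k ∈ {0,…,ℓ−1}` of `ZMod ℓ`). -/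
noncomputable def cycPhi (ℓ : ℕ) (q : ZMod ℓ → ℝ) : ℝ :=
  ∑ k ∈ Finset.range ℓ, (q (k : ZMod ℓ) - q ((k : ZMod ℓ) - 1)) ^ 2

/-- The indicator vector `e_i : ZMod ℓ → ℝ`. -/
def eVec (ℓ : ℕ) (i : ZMod ℓ) : ZMod ℓ → ℝ := fun k => if k = i then 1 else 0

lemma sum_range_cast {ℓ : ℕ} [NeZero ℓ] (f : ZMod ℓ → ℝ) :
    ∑ k ∈ Finset.range ℓ, f (k : ZMod ℓ) = ∑ x : ZMod ℓ, f x := by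
  apply Finset.sum_nbij' (i := fun (k : ℕ) => (k : ZMod ℓ)) (j := fun x => x.val)
  · simp
  · simp [ZMod.val_lt]
  · intro a ha; simp at ha; simp [ZMod.val_natCast_of_lt ha]
  · simp [ZMod.natCast_val]
  · simp

lemma cycPhi_eq {ℓ : ℕ} [NeZero ℓ] (q : ZMod ℓ → ℝ) :
    cycPhi ℓ q = ∑ x : ZMod ℓ, (q x - q (x - 1)) ^ 2 :=
  sum_range_cast (fun x => (q x - q (x - 1)) ^ 2)

lemma telescope {ℓ : ℕ} [NeZero ℓ] (q : ZMod ℓ → ℝ) :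
    ∑ x : ZMod ℓ, (q x - q (x - 1)) = 0 := by
  rw [Finset.sum_sub_distrib,
    show (∑ x : ZMod ℓ, q (x - 1)) = ∑ x : ZMod ℓ, q ((Equiv.subRight (1 : ZMod ℓ)) x) from rfl,
    Equiv.sum_comp (Equiv.subRight (1 : ZMod ℓ)) q, sub_self]

lemma shift_add {ℓ : ℕ} [NeZero ℓ] (δ : ZMod ℓ → ℝ) (g : ℝ)
    (h : ∀ i, δ (i + 1) ≤ δ i + g) (j : ZMod ℓ) :
    ∀ t : ℕ, δ (j + (t : ZMod ℓ)) ≤ δ j + t * g := by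
  intro t
  induction t with
  | zero => simp
  | succ t ih =>
      have : (((t + 1 : ℕ)) : ZMod ℓ) = (t : ZMod ℓ) + 1 := by push_cast; ring
      rw [this, ← add_assoc]
      calc δ (j + (t : ZMod ℓ) + 1) ≤ δ (j + (t : ZMod ℓ)) + g := h _
        _ ≤ δ j + t * g + g := by linarith
        _ = δ j + (t + 1 : ℕ) * g := by push_cast; ring

lemma drift {ℓ : ℕ} (hℓ : 2 ≤ ℓ) (q : ZMod ℓ → ℝ) (i : ZMod ℓ) :
    cycPhi ℓ (q + eVec ℓ i) - cycPhi ℓ q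
      = 2 * (q i - q (i - 1)) - 2 * (q (i + 1) - q i) + 2 := by
  haveI : NeZero ℓ := ⟨by omega⟩
  haveI : Fact (1 < ℓ) := ⟨by omega⟩
  have hne : i ≠ i + 1 := by
    simp [left_eq_add]
  rw [cycPhi_eq, cycPhi_eq, ← Finset.sum_sub_distrib]
  have key : ∀ x : ZMod ℓ,
      ((q + eVec ℓ i) x - (q + eVec ℓ i) (x - 1)) ^ 2 - (q x - q (x - 1)) ^ 2
      = (if x = i then 2 * (q i - q (i - 1)) + 1 else 0)
        + (if x = i + 1 then -(2 * (q (i + 1) - q i)) + 1 else 0) := by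
    intro x
    have hsub : (x - 1 = i) ↔ (x = i + 1) := by
      constructor <;> intro h <;> [rw [← h]; rw [h]] <;> ring
    simp only [Pi.add_apply, eVec, hsub]
    by_cases h1 : x = i
    · have h2 : ¬ x = i + 1 := fun h => hne (h1 ▸ h)
      subst h1
      simp only [if_pos rfl, if_neg h2, if_true]
      ring
    · by_cases h2 : x = i + 1
      · subst h2
        have h3 : i + 1 - 1 = i := by ring
        simp only [if_neg h1, if_pos rfl, if_true, h3]
        ring
      · simp only [if_neg h1, if_neg h2]
        ring
  rw [Finset.sum_congr rfl (fun x _ => key x), Finset.sum_add_distrib,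
    Finset.sum_ite_eq' Finset.univ i, Finset.sum_ite_eq' Finset.univ (i + 1)]
  simp only [Finset.mem_univ, if_pos]
  ring

/-- Gap lemma: if `∑ δ = 0` and `c ≤ |δ k|` with `c > 0`, there is an adjacent
pair with gap at least `c / ℓ`. -/
lemma gap_lemma {ℓ : ℕ} [NeZero ℓ] (δ : ZMod ℓ → ℝ)
    (hsum : ∑ x : ZMod ℓ, δ x = 0)
    (c : ℝ) (hc : 0 < c) (k : ZMod ℓ) (hk : c ≤ |δ k|) :
    ∃ i : ZMod ℓ, c ≤ (ℓ : ℝ) * (δ (i + 1) - δ i) := by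
  obtain ⟨i0, -, hmax⟩ := Finset.exists_max_image Finset.univ
    (fun x : ZMod ℓ => δ (x + 1) - δ x) Finset.univ_nonempty
  refine ⟨i0, ?_⟩
  have hstep : ∀ x : ZMod ℓ, δ (x + 1) ≤ δ x + (δ (i0 + 1) - δ i0) := fun x => by
    have := hmax x (Finset.mem_univ x); linarith
  have main : ∃ t : ℕ, 1 ≤ t ∧ t < ℓ ∧ c ≤ (t : ℝ) * (δ (i0 + 1) - δ i0) := by
    rcases le_or_gt (δ k) 0 with hneg | hpos
    · -- |δ k| = -δ k ; find j with 0 ≤ δ j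
      have hk' : c ≤ -δ k := by
        rwa [abs_of_nonpos hneg] at hk
      have hj : ∃ j : ZMod ℓ, 0 ≤ δ j := by
        by_contra h
        push_neg at h
        have := Finset.sum_neg (fun x _ => h x) Finset.univ_nonempty
        rw [hsum] at this; exact lt_irrefl _ this
      obtain ⟨j, hj⟩ := hj
      have hjk : j ≠ k := fun h => by rw [h] at hj; linarith
      refine ⟨(j - k).val, ?_, ZMod.val_lt _, ?_⟩
      · rcases Nat.eq_zero_or_pos (j - k).val with h0 | h1
        · exfalso
          have : j - k = 0 := by rwa [ZMod.val_eq_zero] at h0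
          exact hjk (by linear_combination this)
        · exact h1
      · have hteq : k + (((j - k).val : ℕ) : ZMod ℓ) = j := by
          rw [ZMod.natCast_rightInverse (j - k)]; ring
        have h1 := shift_add δ _ hstep k (j - k).val
        rw [hteq] at h1
        linarith
    · have hk' : c ≤ δ k := by rwa [abs_of_pos hpos] at hk
      have hj : ∃ j : ZMod ℓ, δ j ≤ 0 := by
        by_contra h
        push_neg at h
        have := Finset.sum_pos (fun x _ => h x) Finset.univ_nonempty
        rw [hsum] at this; exact lt_irrefl _ this
      obtain ⟨j, hj⟩ := hj
      have hjk : k ≠ j := fun h => by rw [h] at hpos; linarith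
      refine ⟨(k - j).val, ?_, ZMod.val_lt _, ?_⟩
      · rcases Nat.eq_zero_or_pos (k - j).val with h0 | h1
        · exfalso
          have : k - j = 0 := by rwa [ZMod.val_eq_zero] at h0
          exact hjk (by linear_combination this)
        · exact h1
      · have hteq : j + (((k - j).val : ℕ) : ZMod ℓ) = k := by
          rw [ZMod.natCast_rightInverse (k - j)]; ring
        have h1 := shift_add δ _ hstep j (k - j).val
        rw [hteq] at h1
        linarith
  obtain ⟨t, ht1, ht2, htc⟩ := main
  have ht1' : (1 : ℝ) ≤ (t : ℝ) := by exact_mod_cast ht1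
  have ht2' : (t : ℝ) ≤ (ℓ : ℝ) := by exact_mod_cast le_of_lt ht2
  have hg0 : 0 ≤ δ (i0 + 1) - δ i0 := by nlinarith
  nlinarith

/-- If the total cyclic sum-of-squares potential of at most `n` configurations
(each on at most `n` resource types) is at least `4n⁴`, then some configuration
`m` and resource type `i` give a potential decrease of at least `√Φ / n²`. -/
theorem exists_large_negative_drift
    (n : ℕ) (hn : 1 ≤ n) (ι : Type) [Fintype ι] [Nonempty ι]
    (hcard : Fintype.card ι ≤ n)
    (ℓ : ι → ℕ) (hℓ2 : ∀ m, 2 ≤ ℓ m) (hℓn : ∀ m, ℓ m ≤ n)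
    (q : ∀ m, ZMod (ℓ m) → ℝ)
    (hΦ : 4 * (n : ℝ) ^ 4 ≤ ∑ m, cycPhi (ℓ m) (q m)) :
    ∃ m, ∃ i : ZMod (ℓ m),
      cycPhi (ℓ m) (q m + eVec (ℓ m) i) - cycPhi (ℓ m) (q m)
        ≤ -(Real.sqrt (∑ m, cycPhi (ℓ m) (q m)) / (n : ℝ) ^ 2) := by
  have hN1 : (1 : ℝ) ≤ (n : ℝ) := by exact_mod_cast hn
  have hN0 : (0 : ℝ) < (n : ℝ) := by linarith
  have hΦpos : (0 : ℝ) < ∑ m, cycPhi (ℓ m) (q m) := by nlinarith [pow_pos hN0 4]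
  -- Step 1 : some m with large potential
  have step1 : ∃ m, (∑ m, cycPhi (ℓ m) (q m)) ≤ (n : ℝ) * cycPhi (ℓ m) (q m) := by
    by_contra h
    push_neg at h
    have hlt : ∀ m, cycPhi (ℓ m) (q m) < (∑ m, cycPhi (ℓ m) (q m)) / (n : ℝ) := fun m => by
      rw [lt_div_iff₀ hN0]; nlinarith [h m]
    have hsum := Finset.sum_lt_sum_of_nonempty Finset.univ_nonempty
      (f := fun m => cycPhi (ℓ m) (q m))
      (g := fun _ => (∑ m, cycPhi (ℓ m) (q m)) / (n : ℝ)) (fun m _ => hlt m)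
    rw [Finset.sum_const, nsmul_eq_mul] at hsum
    have hcardN : (Fintype.card ι : ℝ) ≤ (n : ℝ) := by exact_mod_cast hcard
    have h2 : (∑ m, cycPhi (ℓ m) (q m))
        < (n : ℝ) * ((∑ m, cycPhi (ℓ m) (q m)) / (n : ℝ)) :=
      lt_of_lt_of_le hsum
        (mul_le_mul_of_nonneg_right hcardN (le_of_lt (div_pos hΦpos hN0)))
    rw [mul_div_cancel₀ _ (ne_of_gt hN0)] at h2
    exact lt_irrefl _ h2
  obtain ⟨m, hm⟩ := step1
  haveI : NeZero (ℓ m) := ⟨by have := hℓ2 m; omega⟩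
  have hL : (1 : ℝ) ≤ (ℓ m : ℝ) := by exact_mod_cast (by have := hℓ2 m; omega : 1 ≤ ℓ m)
  have hLN : ((ℓ m : ℝ)) ≤ (n : ℝ) := by exact_mod_cast hℓn m
  -- Step 2 : some k with large |δ k|
  have step2 : ∃ k : ZMod (ℓ m),
      cycPhi (ℓ m) (q m) ≤ (ℓ m : ℝ) * (q m k - q m (k - 1)) ^ 2 := by
    by_contra h
    push_neg at h
    have hlt : ∀ x : ZMod (ℓ m),
        (q m x - q m (x - 1)) ^ 2 < cycPhi (ℓ m) (q m) / (ℓ m : ℝ) := fun x => by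
      rw [lt_div_iff₀ (by linarith)]; nlinarith [h x]
    have hsum := Finset.sum_lt_sum_of_nonempty Finset.univ_nonempty
      (f := fun x : ZMod (ℓ m) => (q m x - q m (x - 1)) ^ 2)
      (g := fun _ => cycPhi (ℓ m) (q m) / (ℓ m : ℝ)) (fun x _ => hlt x)
    rw [Finset.sum_const, nsmul_eq_mul, Finset.card_univ, ZMod.card,
      mul_div_cancel₀ _ (by positivity : (ℓ m : ℝ) ≠ 0), ← cycPhi_eq] at hsum
    exact lt_irrefl _ hsum
  obtain ⟨k, hk⟩ := step2
  have hs0 : 0 ≤ Real.sqrt (∑ m, cycPhi (ℓ m) (q m)) := Real.sqrt_nonneg _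
  have hs2 : 2 * (n : ℝ) ^ 2 ≤ Real.sqrt (∑ m, cycPhi (ℓ m) (q m)) := by
    have h1 : Real.sqrt (4 * (n : ℝ) ^ 4) ≤ Real.sqrt (∑ m, cycPhi (ℓ m) (q m)) :=
      Real.sqrt_le_sqrt hΦ
    rwa [show 4 * (n : ℝ) ^ 4 = (2 * (n : ℝ) ^ 2) ^ 2 by ring,
      Real.sqrt_sq (by positivity)] at h1
  have hΦk : (∑ m, cycPhi (ℓ m) (q m)) ≤ (n : ℝ) ^ 2 * (q m k - q m (k - 1)) ^ 2 := by
    nlinarith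
  have hsk : Real.sqrt (∑ m, cycPhi (ℓ m) (q m)) ≤ (n : ℝ) * |q m k - q m (k - 1)| := by
    have h1 : Real.sqrt (∑ m, cycPhi (ℓ m) (q m))
        ≤ Real.sqrt ((n : ℝ) ^ 2 * (q m k - q m (k - 1)) ^ 2) := Real.sqrt_le_sqrt hΦk
    rwa [show (n : ℝ) ^ 2 * (q m k - q m (k - 1)) ^ 2
        = ((n : ℝ) * |q m k - q m (k - 1)|) ^ 2 by rw [mul_pow, sq_abs],
      Real.sqrt_sq (by positivity)] at h1
  -- apply the gap lemma with c = √Φ / n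
  have hc : 0 < Real.sqrt (∑ m, cycPhi (ℓ m) (q m)) / (n : ℝ) :=
    div_pos (by nlinarith) hN0
  have hkabs : Real.sqrt (∑ m, cycPhi (ℓ m) (q m)) / (n : ℝ) ≤ |q m k - q m (k - 1)| := by
    rw [div_le_iff₀ hN0]; linarith [hsk]
  obtain ⟨i, hi⟩ := gap_lemma (fun x => q m x - q m (x - 1)) (telescope (q m))
    _ hc k hkabs
  rw [show (i + 1 - 1 : ZMod (ℓ m)) = i by ring] at hi
  refine ⟨m, i, ?_⟩
  rw [drift (hℓ2 m) (q m) i]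
  set s : ℝ := Real.sqrt (∑ m, cycPhi (ℓ m) (q m))
  -- hi : s / n ≤ ℓ * (δ(i+1) - δ i) ; with ℓ ≤ n get s ≤ n² * gap
  have hgap0 : 0 ≤ (q m (i + 1) - q m i) - (q m i - q m (i - 1)) := by
    nlinarith [hi, mul_pos hN0 hc]
  have hg2 : s ≤ (n : ℝ) ^ 2 * ((q m (i + 1) - q m i) - (q m i - q m (i - 1))) := by
    have h1 : s / (n : ℝ) ≤ (n : ℝ) * ((q m (i + 1) - q m i) - (q m i - q m (i - 1))) := by
      nlinarith [hi]
    rw [div_le_iff₀ hN0] at h1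
    nlinarith [h1]
  have hA : s / (n : ℝ) ^ 2 ≤ (q m (i + 1) - q m i) - (q m i - q m (i - 1)) := by
    rw [div_le_iff₀ (by positivity)]; linarith [hg2]
  have hB : (2 : ℝ) ≤ s / (n : ℝ) ^ 2 := by
    rw [le_div_iff₀ (by positivity)]; linarith [hs2]
  linarith [hA, hB]
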